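/- Let D be a compact metric space, H a separable real Hilbert space, and let (u_k) be a sequence of H-valued vector measures on D each supported on at most N points. Then every weak-* accumulation point û of (u_k) is supported on at most N points. -/

import Mathlib

open NormedSpace

/-- The support of an `H`-valued vector measure `u` on `D` (identified with an element of
the dual of `C(D,H)`): a point `x` belongs to the support of `|u|` iff `u` does not vanish
on any neighborhood of `x`, i.e. for every neighborhood `U` of `x` there is a test
function `φ` supported in `U` with `⟨u, φ⟩ ≠ 0`. -/
def measSupport {D H : Type*} [TopologicalSpace D] [CompactSpace D]
    [NormedAddCommGroup H] [NormedSpace ℝ H] (u : WeakDual ℝ C(D, H)) : Set D :=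
  {x : D | ∀ U ∈ nhds x, ∃ φ : C(D, H), (∀ y ∉ U, φ y = 0) ∧ u φ ≠ 0}

open Metric in
/-- If `φ` vanishes outside a closed set `K` disjoint from the support of `u`,
then `u φ = 0`.  Proved via a partition of unity built from distance functions. -/
lemma eval_zero_of_disjoint_measSupport {D H : Type*} [MetricSpace D] [CompactSpace D]
    [NormedAddCommGroup H] [NormedSpace ℝ H]
    (u : WeakDual ℝ C(D, H)) (K : Set D) (hK : IsClosed K)
    (hdisj : ∀ x ∈ K, x ∉ measSupport u) (φ : C(D, H)) (hφ : ∀ y ∉ K, φ y = 0) :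
    u φ = 0 := by
  classical
  rcases Set.eq_empty_or_nonempty K with hKe | hKne
  · have hφ0 : φ = 0 := ContinuousMap.ext fun y => hφ y (by simp [hKe])
    simp [hφ0]
  -- For each point of K, a neighborhood on which u vanishes
  have h1 : ∀ x ∈ K, ∃ V ∈ nhds x, ∀ ψ : C(D, H), (∀ y ∉ V, ψ y = 0) → u ψ = 0 := by
    intro x hx
    have := hdisj x hx
    simp only [measSupport, Set.mem_setOf_eq] at this
    push_neg at this
    exact this
  choose! V hV1 hV2 using h1
  obtain ⟨t, htK, hcover⟩ := (hK.isCompact).elim_nhds_subcover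
    (fun x => interior (V x)) (fun x hx => interior_mem_nhds.mpr (hV1 x hx))
  by_cases huniv : ∃ x ∈ t, interior (V x) = Set.univ
  · obtain ⟨x, hxt, hxu⟩ := huniv
    refine hV2 x (htK x hxt) φ fun y hy => ?_
    exact absurd (interior_subset (hxu ▸ Set.mem_univ y)) hy
  push_neg at huniv
  have hne : ∀ x ∈ t, ((interior (V x))ᶜ : Set D).Nonempty := by
    intro x hx
    rw [Set.nonempty_compl]
    exact huniv x hx
  -- distance-function partition of unity
  set f : D → D → ℝ := fun x y => infDist y (interior (V x))ᶜ with hf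
  set f0 : D → ℝ := fun y => infDist y K with hf0
  set denom : D → ℝ := fun y => f0 y + ∑ x ∈ t, f x y with hdenomdef
  have hdenom : ∀ y, 0 < denom y := by
    intro y
    by_cases hy : y ∈ K
    · refine add_pos_of_nonneg_of_pos infDist_nonneg ?_
      have := hcover hy
      simp only [Set.mem_iUnion] at this
      obtain ⟨x, hxt, hxy⟩ := this
      refine Finset.sum_pos' (fun i _ => infDist_nonneg) ⟨x, hxt, ?_⟩
      have hcl : IsClosed ((interior (V x))ᶜ : Set D) := isOpen_interior.isClosed_compl
      exact (hcl.notMem_iff_infDist_pos (hne x hxt)).mp (by simpa using hxy)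
    · refine add_pos_of_pos_of_nonneg ?_ (Finset.sum_nonneg fun i _ => infDist_nonneg)
      exact (hK.notMem_iff_infDist_pos hKne).mp hy
  have hcontf : ∀ x, Continuous (f x) := fun x => continuous_infDist_pt _
  have hcontdenom : Continuous denom :=
    (continuous_infDist_pt K).add (continuous_finset_sum t fun x _ => hcontf x)
  -- the pieces
  set ψ : D → C(D, H) := fun x =>
    ⟨fun y => (f x y / denom y) • φ y,
      (((hcontf x).div hcontdenom fun y => (hdenom y).ne').smul φ.continuous)⟩ with hψdef
  have hsum : φ = ∑ x ∈ t, ψ x := by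
    ext y
    rw [ContinuousMap.sum_apply]
    by_cases hy : y ∈ K
    · have hf0y : f0 y = 0 := infDist_zero_of_mem hy
      have : ∑ x ∈ t, (ψ x) y = ((∑ x ∈ t, f x y) / denom y) • φ y := by
        simp only [hψdef, ContinuousMap.coe_mk]
        rw [← Finset.sum_smul, Finset.sum_div]
      rw [this]
      have hdy : denom y = ∑ x ∈ t, f x y := by
        simp [hdenomdef, hf0y]
      rw [← hdy, div_self (hdenom y).ne', one_smul]
    · have hφy : φ y = 0 := hφ y hy
      simp only [hψdef, ContinuousMap.coe_mk, hφy, smul_zero, Finset.sum_const_zero]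
  have hvanish : ∀ x ∈ t, u (ψ x) = 0 := by
    intro x hx
    refine hV2 x (htK x hx) (ψ x) fun y hy => ?_
    have : y ∈ ((interior (V x))ᶜ : Set D) := fun hmem => hy (interior_subset hmem)
    have hfy : f x y = 0 := infDist_zero_of_mem this
    simp [hψdef, hfy]
  calc u φ = u (∑ x ∈ t, ψ x) := by rw [← hsum]
    _ = ∑ x ∈ t, u (ψ x) := map_sum u ψ t
    _ = 0 := Finset.sum_eq_zero hvanish

/-- Let `D` be a compact metric space, `H` a separable real Hilbert
space, and `(u_k)` a sequence of `H`-valued vector measures on `D`, each supported on at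
most `N` points.  Then every weak-* accumulation point `û` of `(u_k)` is supported on at
most `N` points. -/
theorem accumulation_point_support_card_le
    (D H : Type*) [MetricSpace D] [CompactSpace D]
    [NormedAddCommGroup H] [InnerProductSpace ℝ H] [CompleteSpace H]
    [TopologicalSpace.SeparableSpace H] (N : ℕ)
    (u : ℕ → WeakDual ℝ C(D, H))
    (hsupp : ∀ k, (measSupport (u k)).Finite ∧ (measSupport (u k)).ncard ≤ N)
    (uhat : WeakDual ℝ C(D, H)) (hacc : MapClusterPt uhat Filter.atTop u) :
    (measSupport uhat).Finite ∧ (measSupport uhat).ncard ≤ N := by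
  classical
  by_contra hcon
  -- extract N+1 distinct points of the support of uhat
  have hbig : ∃ s : Set D, s ⊆ measSupport uhat ∧ s.Finite ∧ s.ncard = N + 1 := by
    by_cases hfin : (measSupport uhat).Finite
    · have hlt : N < (measSupport uhat).ncard := by
        by_contra h
        push_neg at h
        exact hcon ⟨hfin, h⟩
      obtain ⟨s, hs, hcard⟩ := Set.exists_subset_card_eq hlt
      exact ⟨s, hs, hfin.subset hs, hcard⟩
    · obtain ⟨s, hs, hsf, hcard⟩ := (Set.not_infinite.not_right.mpr hfin :
        (measSupport uhat).Infinite).exists_subset_ncard_eq (N + 1)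
      exact ⟨s, hs, hsf, hcard⟩
  obtain ⟨s, hsub, hsfin, hscard⟩ := hbig
  set F : Finset D := hsfin.toFinset with hFdef
  have hFsub : ∀ x ∈ F, x ∈ measSupport uhat := by
    intro x hx
    exact hsub (by simpa [hFdef] using hx)
  have hFcard : F.card = N + 1 := by
    rw [hFdef, ← Set.ncard_coe_finset, Set.Finite.coe_toFinset]
    exact hscard
  -- separation radius
  set ε : ℝ := if h : F.offDiag.Nonempty
    then F.offDiag.inf' h (fun p => dist p.1 p.2) else 1 with hεdef
  have hεpos : 0 < ε := by
    rw [hεdef]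
    split_ifs with h
    · rw [Finset.lt_inf'_iff]
      intro p hp
      exact dist_pos.mpr (Finset.mem_offDiag.mp hp).2.2
    · norm_num
  have hεle : ∀ x ∈ F, ∀ y ∈ F, x ≠ y → ε ≤ dist x y := by
    intro x hx y hy hxy
    have hmem : (x, y) ∈ F.offDiag := Finset.mem_offDiag.mpr ⟨hx, hy, hxy⟩
    rw [hεdef]
    rw [dif_pos ⟨_, hmem⟩]
    exact Finset.inf'_le _ hmem
  -- test functions around each point
  have h2 : ∀ x ∈ F, ∃ φ : C(D, H),
      (∀ y ∉ Metric.closedBall x (ε / 3), φ y = 0) ∧ uhat φ ≠ 0 := by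
    intro x hx
    exact hFsub x hx (Metric.closedBall x (ε / 3))
      (Metric.closedBall_mem_nhds x (by positivity))
  choose! φ hφ1 hφ2 using h2
  -- an open weak-* neighborhood of uhat
  set W : Set (WeakDual ℝ C(D, H)) := {v | ∀ x ∈ F, v (φ x) ≠ 0} with hWdef
  have hWopen : IsOpen W := by
    have : W = ⋂ x ∈ F, (fun v : WeakDual ℝ C(D, H) => v (φ x)) ⁻¹' ({0}ᶜ) := by
      ext v; simp [hWdef]
    rw [this]
    exact isOpen_biInter_finset fun x _ =>
      isOpen_compl_singleton.preimage (WeakDual.eval_continuous (φ x))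
  have hWmem : uhat ∈ W := fun x hx => hφ2 x hx
  obtain ⟨k, hk⟩ := (mapClusterPt_iff_frequently.mp hacc W (hWopen.mem_nhds hWmem)).exists
  -- for this k, each ball meets the support of u k
  have h3 : ∀ x ∈ F, ∃ y, y ∈ measSupport (u k) ∧ y ∈ Metric.closedBall x (ε / 3) := by
    intro x hx
    by_contra hcontra
    push_neg at hcontra
    have : u k (φ x) = 0 := by
      refine eval_zero_of_disjoint_measSupport (u k) (Metric.closedBall x (ε / 3))
        Metric.isClosed_closedBall (fun y hy hmem => hcontra y hmem hy) (φ x) (hφ1 x hx)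
    exact hk x hx this
  choose! y hy1 hy2 using h3
  -- y is injective on F
  have hinj : Set.InjOn y ↑F := by
    intro x1 hx1 x2 hx2 heq
    by_contra hne
    have h1 : dist x1 x2 ≤ dist x1 (y x1) + dist (y x1) x2 := dist_triangle _ _ _
    have h2 : dist x1 (y x1) ≤ ε / 3 := by
      rw [dist_comm]; exact Metric.mem_closedBall.mp (hy2 x1 hx1)
    have h3 : dist (y x1) x2 ≤ ε / 3 := by
      rw [heq]; exact Metric.mem_closedBall.mp (hy2 x2 hx2)
    have h4 : ε ≤ dist x1 x2 := hεle x1 hx1 x2 hx2 hne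
    linarith
  -- contradiction with cardinality bound
  have himg : y '' ↑F ⊆ measSupport (u k) := by
    rintro _ ⟨x, hx, rfl⟩
    exact hy1 x hx
  have hcard1 : (y '' ↑F).ncard = N + 1 := by
    rw [Set.ncard_image_of_injOn hinj, Set.ncard_coe_finset, hFcard]
  have hcard2 : (y '' ↑F).ncard ≤ N :=
    le_trans (Set.ncard_le_ncard himg (hsupp k).1) (hsupp k).2
  omega
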